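/- Let Γ and Δ be groups, F ⊆ Γ a finite subset, and φ : F → Δ a local embedding (an injective map such that φ(gh) = φ(g)φ(h) whenever g, h, gh ∈ F). Suppose Δ₁, ..., Δ_m are finite subgroups of Γ with trivial center which generate their direct product in Γ, and all elements of each Δ_i and all products g_i·g_j (g_i ∈ Δ_i, g_j ∈ Δ_j) lie in F. Then the images φ(Δ₁), ..., φ(Δ_m) are subgroups of Δ generating their direct product, and |Δ| ≥ ∏_i |Δ_i|. -/

import Mathlib

lemma ofFn_prod_eq_noncommProd {β : Type*} [Monoid β] {m : ℕ} (f : Fin m → β)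
    (comm : ((Finset.univ : Finset (Fin m)) : Set (Fin m)).Pairwise (fun a b => Commute (f a) (f b))) :
    (List.ofFn f).prod = Finset.univ.noncommProd f comm := by
  have h1 : (List.finRange m).toFinset = Finset.univ := List.toFinset_finRange m
  rw [List.ofFn_eq_map,
    ← Finset.noncommProd_toFinset (List.finRange m) f (h1 ▸ comm) (List.nodup_finRange m)]
  congr 1

/-- If `φ : F → Δ` is a local embedding of a finite subset `F` of a group `Γ`,
and `Δ₁, …, Δₘ ≤ Γ` are finite centreless subgroups generating their direct product, with
all their elements and pairwise products lying in `F`, then the images `φ(Δᵢ)` are subgroups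
of `Δ` generating their direct product, and `|Δ| ≥ ∏ᵢ |Δᵢ|`. -/
theorem stmt0 {Γ Δ : Type*} [Group Γ] [Group Δ] (F : Finset Γ) (φ : Γ → Δ)
    (hinj : Set.InjOn φ (F : Set Γ))
    (hhom : ∀ g ∈ (F : Set Γ), ∀ h ∈ (F : Set Γ), g * h ∈ (F : Set Γ) →
      φ (g * h) = φ g * φ h)
    (m : ℕ) (D : Fin m → Subgroup Γ)
    (hfin : ∀ i, Finite (D i))
    (hcenterless : ∀ i, ∀ g ∈ D i, (∀ h ∈ D i, Commute g h) → g = 1)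
    (hcomm : ∀ i j, i ≠ j → ∀ g ∈ D i, ∀ h ∈ D j, Commute g h)
    (hdirect : Function.Injective (fun f : (∀ i, D i) => (List.ofFn fun i => (f i : Γ)).prod))
    (hmem : ∀ i, ∀ g ∈ D i, g ∈ (F : Set Γ))
    (hprodmem : ∀ i j, i ≠ j → ∀ g ∈ D i, ∀ h ∈ D j, g * h ∈ (F : Set Γ)) :
    (∃ E : Fin m → Subgroup Δ,
      (∀ i, (E i : Set Δ) = φ '' (D i : Set Γ)) ∧
      (∀ i j, i ≠ j → ∀ g ∈ E i, ∀ h ∈ E j, Commute g h) ∧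
      Function.Injective (fun f : (∀ i, E i) => (List.ofFn fun i => (f i : Δ)).prod)) ∧
    ((∏ i, Nat.card (D i) : ℕ) : Cardinal) ≤ Cardinal.mk Δ := by
  classical
  -- φ is multiplicative on each D i
  have hφmul : ∀ i, ∀ g ∈ D i, ∀ h ∈ D i, φ (g * h) = φ g * φ h := fun i g hg h hh =>
    hhom g (hmem i g hg) h (hmem i h hh) (hmem i _ (mul_mem hg hh))
  -- images of different D i, D j commute
  have hφcomm : ∀ i j, i ≠ j → ∀ g ∈ D i, ∀ h ∈ D j, Commute (φ g) (φ h) := by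
    intro i j hij g hg h hh
    show φ g * φ h = φ h * φ g
    rw [← hhom g (hmem i g hg) h (hmem j h hh) (hprodmem i j hij g hg h hh),
      ← hhom h (hmem j h hh) g (hmem i g hg) (hprodmem j i hij.symm h hh g hg),
      (hcomm i j hij g hg h hh).eq]
  -- the homomorphisms ψ i : D i →* Δ
  let ψ : ∀ i, (D i) →* Δ := fun i =>
    MonoidHom.mk' (fun x : D i => φ (x : Γ)) (fun a b => hφmul i a a.2 b b.2)
  let E : Fin m → Subgroup Δ := fun i => (ψ i).range
  have hEset : ∀ i, (E i : Set Δ) = φ '' (D i : Set Γ) := by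
    intro i
    ext y
    constructor
    · rintro ⟨x, rfl⟩; exact ⟨(x : Γ), x.2, rfl⟩
    · rintro ⟨x, hx, rfl⟩; exact ⟨⟨x, hx⟩, rfl⟩
  -- pairwise commuting hypothesis for noncommProd
  have hpair : ∀ g : (∀ i, D i),
      ((Finset.univ : Finset (Fin m)) : Set (Fin m)).Pairwise
        (fun a b => Commute (φ (g a : Γ)) (φ (g b : Γ))) :=
    fun g a _ b _ hab => hφcomm a b hab _ (g a).2 _ (g b).2
  -- key conjugation identity
  have key : ∀ (g : ∀ i, D i) (j : Fin m) (h : Γ), h ∈ D j →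
      (List.ofFn fun i => φ (g i : Γ)).prod * φ h
        = φ ((g j : Γ) * h * (g j : Γ)⁻¹) * (List.ofFn fun i => φ (g i : Γ)).prod := by
    intro g j h hh
    have hsplit := Finset.mul_noncommProd_erase Finset.univ (Finset.mem_univ j)
      (fun i => φ (g i : Γ)) (hpair g)
    rw [ofFn_prod_eq_noncommProd _ (hpair g), ← hsplit]
    set P := (Finset.univ.erase j).noncommProd (fun i => φ (g i : Γ)) _ with hP
    have hPcomm : Commute (φ h) P := by
      apply Finset.noncommProd_commute
      intro x hx
      exact (hφcomm x j (Finset.ne_of_mem_erase hx) _ (g x).2 h hh).symm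
    have hgj : (g j : Γ) * h = ((g j : Γ) * h * (g j : Γ)⁻¹) * (g j : Γ) := by group
    have h1 : φ ((g j : Γ) * h) = φ (g j : Γ) * φ h := hφmul j _ (g j).2 h hh
    have hconjmem : (g j : Γ) * h * (g j : Γ)⁻¹ ∈ D j :=
      mul_mem (mul_mem (g j).2 hh) (inv_mem (g j).2)
    have h2 : φ ((g j : Γ) * h * (g j : Γ)⁻¹ * (g j : Γ))
        = φ ((g j : Γ) * h * (g j : Γ)⁻¹) * φ (g j : Γ) :=
      hφmul j _ hconjmem _ (g j).2
    have hgj' : (g j : Γ) * h * (g j : Γ)⁻¹ * (g j : Γ) = (g j : Γ) * h := by group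
    calc φ (g j : Γ) * P * φ h = φ (g j : Γ) * (φ h * P) := by rw [mul_assoc, ← hPcomm.eq]
      _ = (φ (g j : Γ) * φ h) * P := by rw [mul_assoc]
      _ = φ ((g j : Γ) * h) * P := by rw [← h1]
      _ = φ ((g j : Γ) * h * (g j : Γ)⁻¹ * (g j : Γ)) * P := by rw [hgj']
      _ = φ ((g j : Γ) * h * (g j : Γ)⁻¹) * (φ (g j : Γ) * P) := by rw [h2, mul_assoc]
  -- injectivity of the product map at the D level (via φ)
  have keyinj : ∀ g g' : (∀ i, D i),
      (List.ofFn fun i => φ (g i : Γ)).prod = (List.ofFn fun i => φ (g' i : Γ)).prod →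
      g = g' := by
    intro g g' heq
    funext j
    ext
    have hcent : ∀ h ∈ D j, Commute ((g' j : Γ)⁻¹ * (g j : Γ)) h := by
      intro h hh
      have e1 := key g j h hh
      have e2 := key g' j h hh
      rw [heq] at e1
      have e3 : φ ((g j : Γ) * h * (g j : Γ)⁻¹) = φ ((g' j : Γ) * h * (g' j : Γ)⁻¹) := by
        have := e1.symm.trans e2
        exact mul_right_cancel this
      have hmem1 : (g j : Γ) * h * (g j : Γ)⁻¹ ∈ D j :=
        mul_mem (mul_mem (g j).2 hh) (inv_mem (g j).2)
      have hmem2 : (g' j : Γ) * h * (g' j : Γ)⁻¹ ∈ D j :=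
        mul_mem (mul_mem (g' j).2 hh) (inv_mem (g' j).2)
      have e4 : (g j : Γ) * h * (g j : Γ)⁻¹ = (g' j : Γ) * h * (g' j : Γ)⁻¹ :=
        hinj (hmem j _ hmem1) (hmem j _ hmem2) e3
      show (g' j : Γ)⁻¹ * (g j : Γ) * h = h * ((g' j : Γ)⁻¹ * (g j : Γ))
      calc (g' j : Γ)⁻¹ * (g j : Γ) * h
          = (g' j : Γ)⁻¹ * ((g j : Γ) * h * (g j : Γ)⁻¹ * (g j : Γ)) := by group
        _ = (g' j : Γ)⁻¹ * ((g' j : Γ) * h * (g' j : Γ)⁻¹ * (g j : Γ)) := by rw [e4]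
        _ = h * ((g' j : Γ)⁻¹ * (g j : Γ)) := by group
    have hmemk : (g' j : Γ)⁻¹ * (g j : Γ) ∈ D j := mul_mem (inv_mem (g' j).2) (g j).2
    have hone := hcenterless j _ hmemk hcent
    exact (inv_mul_eq_one.mp hone).symm
  refine ⟨⟨E, hEset, ?_, ?_⟩, ?_⟩
  · -- commuting
    intro i j hij x hx y hy
    rw [← SetLike.mem_coe, hEset i] at hx
    rw [← SetLike.mem_coe, hEset j] at hy
    obtain ⟨a, ha, rfl⟩ := hx
    obtain ⟨b, hb, rfl⟩ := hy
    exact hφcomm i j hij a ha b hb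
  · -- injectivity at E level
    intro f f' heq
    simp only at heq
    have hch : ∀ i, ∃ x : D i, φ (x : Γ) = (f i : Δ) := fun i => (f i).2
    have hch' : ∀ i, ∃ x : D i, φ (x : Γ) = (f' i : Δ) := fun i => (f' i).2
    choose g hg using hch
    choose g' hg' using hch'
    have e1 : (List.ofFn fun i => φ (g i : Γ)).prod = (List.ofFn fun i => φ (g' i : Γ)).prod := by
      have l1 : (List.ofFn fun i => φ (g i : Γ)) = List.ofFn fun i => (f i : Δ) := by
        simp [hg]
      have l2 : (List.ofFn fun i => φ (g' i : Γ)) = List.ofFn fun i => (f' i : Δ) := by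
        simp [hg']
      rw [l1, l2, heq]
    have := keyinj g g' e1
    funext i
    ext
    rw [← hg i, ← hg' i, this]
  · -- cardinality
    haveI : ∀ i, Finite (D i) := hfin
    haveI : Finite (∀ i, D i) := Pi.finite
    have hcard : Nat.card (∀ i, D i) = ∏ i, Nat.card (D i) := Nat.card_pi
    have hmk : ((Nat.card (∀ i, D i) : ℕ) : Cardinal) = Cardinal.mk (∀ i, D i) := by
      rw [Nat.card, Cardinal.cast_toNat_of_lt_aleph0 (Cardinal.lt_aleph0_of_finite _)]
    have hemb : Function.Injective
        (fun g : (∀ i, D i) => (List.ofFn fun i => φ (g i : Γ)).prod) :=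
      fun g g' h => keyinj g g' h
    have h1 := Cardinal.lift_mk_le'.mpr ⟨⟨_, hemb⟩⟩
    rw [← hmk, Cardinal.lift_natCast] at h1
    rw [← hcard]
    exact Cardinal.lift_le.mp (by rw [Cardinal.lift_natCast]; exact h1)
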